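/- Let D be an analytically irreducible local Noetherian domain of Krull dimension greater than 1, and let v_1,…,v_n be valuations on the quotient field of the completion D̂ whose valuation rings are hidden prime divisors of D̂. Then for each z ∈ D̂ there exists d ∈ D (viewed in D̂ via the canonical embedding D → D̂) such that v_i(z) = v_i(d) for every i = 1,…,n. -/

import Mathlib

namespace ArticleOT

variable {K : Type*} [Field K]

/-- The localization of `R` at the multiplicative set `A \ P`, as a subset of the field `K`. -/
def locSet (A : Subring K) (P : Ideal A) (R : Subring K) : Set K :=
  {x : K | ∃ r ∈ R, ∃ s : A, s ∉ P ∧ x * (s : K) = r}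

/-- The localization `A_P` of a subring `A` of `K` at a prime ideal `P`, as a subring of `K`. -/
def locSubring (A : Subring K) (P : Ideal A) (hP : P.IsPrime) : Subring K where
  carrier := locSet A P A
  zero_mem' := ⟨0, zero_mem A, 1, fun h => hP.ne_top ((Ideal.eq_top_iff_one P).2 h), by simp⟩
  one_mem' := ⟨1, one_mem A, 1, fun h => hP.ne_top ((Ideal.eq_top_iff_one P).2 h), by simp⟩
  add_mem' := by
    rintro x y ⟨r₁, hr₁, s₁, hs₁, e₁⟩ ⟨r₂, hr₂, s₂, hs₂, e₂⟩
    refine ⟨r₁ * (s₂ : K) + r₂ * (s₁ : K),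
      add_mem (mul_mem hr₁ s₂.2) (mul_mem hr₂ s₁.2), s₁ * s₂,
      fun h => ((hP.mem_or_mem h).elim hs₁ hs₂), ?_⟩
    push_cast
    calc (x + y) * ((s₁ : K) * (s₂ : K)) = (x * s₁) * s₂ + (y * s₂) * s₁ := by ring
    _ = r₁ * s₂ + r₂ * s₁ := by rw [e₁, e₂]
  mul_mem' := by
    rintro x y ⟨r₁, hr₁, s₁, hs₁, e₁⟩ ⟨r₂, hr₂, s₂, hs₂, e₂⟩
    refine ⟨r₁ * r₂, mul_mem hr₁ hr₂, s₁ * s₂,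
      fun h => ((hP.mem_or_mem h).elim hs₁ hs₂), ?_⟩
    push_cast
    calc (x * y) * ((s₁ : K) * (s₂ : K)) = (x * s₁) * (y * s₂) := by ring
    _ = r₁ * r₂ := by rw [e₁, e₂]
  neg_mem' := by
    rintro x ⟨r, hr, s, hs, e⟩
    exact ⟨-r, neg_mem hr, s, hs, by rw [neg_mul, e]⟩

lemma mem_locSubring {A : Subring K} {P : Ideal A} {hP : P.IsPrime} {x : K} :
    x ∈ locSubring A P hP ↔ x ∈ locSet A P A := Iff.rfl

/-- The integral closure of a subring `H` of `K` in `K`, as a subring of `K`.  When `K` is the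
quotient field of `H` this is the integral closure `H̄` of `H`. -/
noncomputable def intClosure (H : Subring K) : Subring K := (integralClosure H K).toSubring

lemma mem_intClosure_of_mem {H : Subring K} {x : K} (hx : x ∈ H) : x ∈ intClosure H := by
  have : IsIntegral (↥H) x := by
    refine ⟨Polynomial.X - Polynomial.C ⟨x, hx⟩, Polynomial.monic_X_sub_C _, ?_⟩
    simp only [Polynomial.eval₂_sub, Polynomial.eval₂_X, Polynomial.eval₂_C]
    exact sub_eq_zero_of_eq rfl
  exact this

/-- `H` is an essentially `n`-valuated subring of `R` (both subrings of the field `K`, which is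
the common quotient field): for each prime ideal `P` of the integral closure `H̄` of `H` there
are `n` (not necessarily distinct) valuation overrings `V i` of `H` with
`H̄_P = V 1 ∩ ⋯ ∩ V n ∩ R_P`. -/
noncomputable def EssNVal (H R : Subring K) (n : ℕ) : Prop :=
  ∀ P : Ideal (intClosure H), P.IsPrime →
    ∃ V : Fin n → Subring K,
      (∀ i, H ≤ V i ∧ ValuationRing (V i)) ∧
      locSet (intClosure H) P (intClosure H) =
        (⋂ i, (V i : Set K)) ∩ locSet (intClosure H) P R

/-- A prime ideal of height one: a nonzero prime all of whose strictly smaller primes are zero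
(in a domain this says precisely that the height is one). -/
def HeightOne {A : Type*} [CommRing A] (Q : Ideal A) : Prop :=
  Q.IsPrime ∧ Q ≠ ⊥ ∧ ∀ Q' : Ideal A, Q'.IsPrime → Q' < Q → Q' = ⊥

/-- `V` is a hidden prime divisor of the local domain `D` (mapped into the field `K`, its
quotient field, by `φ`): `V` is a DVR overring of `D` that dominates `D` (every nonunit of `D`
maps to a nonunit of `V`, i.e. `m_D ⊆ m_V`) and whose residue field `V/m_V` (here `m_V` is the
Jacobson radical, which is the maximal ideal since `V` is local) has transcendence degree
`d - 1` over (the isomorphic image of) the residue field of `D`, where `d = dim D`. -/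
noncomputable def IsHiddenPrimeDivisor {D : Type*} [CommRing D] (φ : D →+* K) (V : Subring K)
    (hV : ∀ r, φ r ∈ V) : Prop :=
  IsDiscreteValuationRing V ∧
  (∀ r : D, ¬ IsUnit r → ¬ IsUnit (φ.codRestrict V hV r)) ∧
  (∃ d : ℕ, ringKrullDim D = (d : ℕ) ∧
    ∃ b : Fin (d - 1) → (↥V ⧸ (⊥ : Ideal V).jacobson),
      IsTranscendenceBasis
        (((Ideal.Quotient.mk ((⊥ : Ideal V).jacobson)).comp (φ.codRestrict V hV)).range) b)

lemma phi_mem_locSubring {D : Type*} [CommRing D] (φ : D →+* K) {H : Subring K}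
    (hDH : ∀ r, φ r ∈ H) {P : Ideal H} (hP : P.IsPrime) (r : D) :
    φ r ∈ locSubring H P hP :=
  ⟨φ r, hDH r, 1, fun h => hP.ne_top ((Ideal.eq_top_iff_one P).2 h), by simp⟩

/-- `Q` is an exceptional prime ideal of the extension `H/D`: `Q` is a height one prime of `H`
such that the localization `H_Q` is a hidden prime divisor of `D`. -/
noncomputable def IsExceptionalPrime {D : Type*} [CommRing D] (φ : D →+* K) (H : Subring K)
    (hDH : ∀ r, φ r ∈ H) (Q : Ideal H) : Prop :=
  ∃ hQ : Q.IsPrime, HeightOne Q ∧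
    IsHiddenPrimeDivisor φ (locSubring H Q hQ) (phi_mem_locSubring φ hDH hQ)

/-- The extension `H/D` is essentially `n`-fibered: for each prime ideal `P` of `H`, the
extension `H_P/D` has at most `n` exceptional prime ideals. -/
noncomputable def EssNFibered {D : Type*} [CommRing D] (φ : D →+* K) (H : Subring K)
    (hDH : ∀ r, φ r ∈ H) (n : ℕ) : Prop :=
  ∀ (P : Ideal H) (hP : P.IsPrime),
    {Q : Ideal (locSubring H P hP) |
        IsExceptionalPrime φ (locSubring H P hP) (phi_mem_locSubring φ hDH hP) Q}.Finite ∧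
    {Q : Ideal (locSubring H P hP) |
        IsExceptionalPrime φ (locSubring H P hP) (phi_mem_locSubring φ hDH hP) Q}.ncard ≤ n

/-- The overring `D[1/f]` of (the image under `φ` of) `D`, as a subring of the field `K`. -/
noncomputable def awayS {D : Type*} [CommRing D] (φ : D →+* K) (f : D) : Subring K :=
  Subring.closure (Set.range φ ∪ {(φ f)⁻¹})

lemma phi_mem_awayS {D : Type*} [CommRing D] (φ : D →+* K) (f : D) (r : D) :
    φ r ∈ awayS φ f :=
  Subring.subset_closure (Or.inl ⟨r, rfl⟩)

/-- The localization of `R` at (the image of) the multiplicative set `S ⊆ D₀`, as a subring of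
the field `K`; `hR` says that `φ` maps `D₀` into `R`. -/
def subLoc {D₀ : Type*} [CommRing D₀] (φ : D₀ →+* K) (S : Submonoid D₀) (R : Subring K)
    (hR : ∀ d, φ d ∈ R) : Subring K where
  carrier := {x : K | ∃ r ∈ R, ∃ s ∈ S, x * φ s = r}
  zero_mem' := ⟨0, zero_mem R, 1, S.one_mem, by simp⟩
  one_mem' := ⟨φ 1, hR 1, 1, S.one_mem, by simp⟩
  add_mem' := by
    rintro x y ⟨r₁, hr₁, s₁, hs₁, e₁⟩ ⟨r₂, hr₂, s₂, hs₂, e₂⟩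
    refine ⟨r₁ * φ s₂ + r₂ * φ s₁, add_mem (mul_mem hr₁ (hR s₂)) (mul_mem hr₂ (hR s₁)),
      s₁ * s₂, S.mul_mem hs₁ hs₂, ?_⟩
    rw [map_mul]
    calc (x + y) * (φ s₁ * φ s₂) = (x * φ s₁) * φ s₂ + (y * φ s₂) * φ s₁ := by ring
    _ = r₁ * φ s₂ + r₂ * φ s₁ := by rw [e₁, e₂]
  mul_mem' := by
    rintro x y ⟨r₁, hr₁, s₁, hs₁, e₁⟩ ⟨r₂, hr₂, s₂, hs₂, e₂⟩
    refine ⟨r₁ * r₂, mul_mem hr₁ hr₂, s₁ * s₂, S.mul_mem hs₁ hs₂, ?_⟩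
    rw [map_mul]
    calc (x * y) * (φ s₁ * φ s₂) = (x * φ s₁) * (y * φ s₂) := by ring
    _ = r₁ * r₂ := by rw [e₁, e₂]
  neg_mem' := by
    rintro x ⟨r, hr, s, hs, e⟩
    exact ⟨-r, neg_mem hr, s, hs, by rw [neg_mul, e]⟩


/-- The localization `D_p` of (the image under `φ` of) `D` at a prime ideal `p` of `D`, as a
subset of the field `K`. -/
def locPrim {D : Type*} [CommRing D] (φ : D →+* K) (p : Ideal D) : Set K :=
  {x : K | ∃ a : D, ∃ s : D, s ∉ p ∧ x * φ s = φ a}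


section Statement7Aux

open AdicCompletion

variable {R : Type*} [CommRing R]

section NoethAux
variable [IsNoetherianRing R] (I : Ideal R)

lemma OT7_mem_map_of_val_eq_zero (N : ℕ) (z : AdicCompletion I R) (hz : z.val N = 0) :
    z ∈ Ideal.map (algebraMap R (AdicCompletion I R)) (I ^ N) := by
  set J : Ideal R := I ^ N with hJ
  let f : ↥J →ₗ[R] R := Submodule.subtype (J : Submodule R R)
  let g : R →ₗ[R] (R ⧸ (I ^ N • ⊤ : Submodule R R)) := Submodule.mkQ _
  have hf : Function.Injective f := Submodule.injective_subtype _
  have hg : Function.Surjective g := Submodule.mkQ_surjective _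
  have hfg : Function.Exact f g := by
    rw [LinearMap.exact_iff, Submodule.ker_mkQ, Submodule.range_subtype]
    rw [smul_eq_mul, Ideal.mul_top]
  haveI : Module.Finite R ↥J := Module.Finite.iff_fg.mpr (IsNoetherian.noetherian J)
  have h0 : map I g z = 0 := by
    ext n
    rcases le_or_gt n N with hn | hn
    · have : z.val n = 0 := by
        rw [← z.property hn, hz, _root_.map_zero]
      simp [this]
    · obtain ⟨r, hr⟩ := Submodule.Quotient.mk_surjective _ (z.val n)
      have hrN : (Submodule.Quotient.mk r : R ⧸ (I ^ N • ⊤ : Submodule R R)) = 0 := by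
        have := z.property hn.le
        rw [← hr] at this
        change (Submodule.Quotient.mk r : R ⧸ (I ^ N • ⊤ : Submodule R R)) = _ at this
        rw [this, hz]
      have hrN' : r ∈ (I ^ N • ⊤ : Submodule R R) := (Submodule.Quotient.mk_eq_zero _).mp hrN
      rw [map_val_apply, ← hr, LinearMap.reduceModIdeal_apply, val_zero]
      have hg0 : g r = 0 := hrN
      rw [hg0]
      simp
  have hrange : z ∈ Set.range (map I f) := (map_exact hf hfg hg z).mp h0
  obtain ⟨w, hw⟩ := hrange
  obtain ⟨k, π, hπ⟩ := Module.Finite.exists_fin' R ↥J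
  obtain ⟨u, hu⟩ := map_surjective I hπ w
  set L : (Fin k → R) →ₗ[R] R := f ∘ₗ π with hL
  have hz' : z = map I L u := by
    rw [hL, ← map_comp_apply, hu, hw]
  obtain ⟨a, rfl⟩ := AdicCompletion.mk_surjective I _ u
  set c : Fin k → R := fun j => L (fun m => if j = m then 1 else 0) with hc
  have hcJ : ∀ j, c j ∈ J := fun j => (π (fun m => if j = m then 1 else 0)).2
  have hLx : ∀ x : Fin k → R, L x = ∑ j, c j • x j := by
    intro x
    rw [LinearMap.pi_apply_eq_sum_univ L x]
    refine Finset.sum_congr rfl fun j _ => ?_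
    rw [smul_eq_mul, smul_eq_mul, mul_comm]
  have hsum : z = ∑ j, c j • AdicCompletion.mk I R
      (AdicCauchySequence.map I (LinearMap.proj j) a) := by
    rw [hz']
    ext n
    rw [val_sum_apply]
    simp only [val_smul_apply]
    have hterm : ∀ j, (AdicCompletion.mk I R (AdicCauchySequence.map I (LinearMap.proj j) a)).val n
        = Submodule.mkQ (I ^ n • ⊤ : Submodule R R) (a n j) := fun j => rfl
    simp only [hterm]
    have hlhs : ((map I L) (AdicCompletion.mk I (Fin k → R) a)).val n
        = Submodule.mkQ (I ^ n • ⊤ : Submodule R R) (L (a n)) := rfl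
    rw [hlhs, hLx (a n), map_sum]
    exact Finset.sum_congr rfl fun j _ => ((Submodule.mkQ _).map_smul (c j) (a n j))
  rw [hsum]
  refine Submodule.sum_mem _ fun j _ => ?_
  rw [Algebra.smul_def]
  exact Ideal.mul_mem_right _ _ (Ideal.mem_map_of_mem _ (hcJ j))

end NoethAux

section OtherAux
variable (I : Ideal R)

lemma OT7_val_algebraMap (r : R) (n : ℕ) :
    ((algebraMap R (AdicCompletion I R)) r).val n = Submodule.Quotient.mk r := rfl

lemma OT7_nonunit_algebraMap_completion [IsLocalRing R] {r : R}
    (hr : r ∈ IsLocalRing.maximalIdeal R) :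
    ¬IsUnit (algebraMap R (AdicCompletion (IsLocalRing.maximalIdeal R) R) r) := by
  set I := IsLocalRing.maximalIdeal R
  intro h
  have h2 : IsUnit (evalₐ I 1 (algebraMap R (AdicCompletion I R) r)) := h.map _
  rw [AlgHom.commutes] at h2
  have h3 : (algebraMap R (R ⧸ I ^ 1)) r = 0 := by
    show Ideal.Quotient.mk (I ^ 1) r = 0
    rw [Ideal.Quotient.eq_zero_iff_mem, pow_one]
    exact hr
  rw [h3] at h2
  haveI : Nontrivial (R ⧸ I ^ 1) := by
    refine Ideal.Quotient.nontrivial_iff.mpr ?_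
    rw [pow_one]
    exact (IsLocalRing.maximalIdeal.isMaximal R).ne_top
  exact zero_ne_one (isUnit_zero_iff.mp h2)

lemma OT7_isUnit_sub_of_nonunit {u t : R} (hu : IsUnit u) (ht : ¬IsUnit t) [IsLocalRing R] :
    IsUnit (u - t) := by
  by_contra h
  have h2 : (u - t) + t ∈ nonunits R :=
    IsLocalRing.nonunits_add (mem_nonunits_iff.mpr h) (mem_nonunits_iff.mpr ht)
  rw [sub_add_cancel] at h2
  exact h2 hu


end OtherAux

end Statement7Aux

/-- Lemma 5.2 of the paper.  Approximation of elements of the completion of an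
analytically irreducible local Noetherian domain by elements of the ring, with respect to
finitely many hidden prime divisors of the completion.  Equality of values `v i z = v i d` is
expressed by mutual divisibility in the valuation ring `V i`. -/
theorem statement7 (D : Type*) [CommRing D] [IsDomain D] [IsLocalRing D] [IsNoetherianRing D]
    (hdim : 1 < ringKrullDim D)
    [IsDomain (AdicCompletion (IsLocalRing.maximalIdeal D) D)]
    (Khat : Type*) [Field Khat]
    [Algebra (AdicCompletion (IsLocalRing.maximalIdeal D) D) Khat]
    [IsFractionRing (AdicCompletion (IsLocalRing.maximalIdeal D) D) Khat]
    (n : ℕ) (V : Fin n → Subring Khat)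
    (hmem : ∀ i (r : AdicCompletion (IsLocalRing.maximalIdeal D) D),
      algebraMap (AdicCompletion (IsLocalRing.maximalIdeal D) D) Khat r ∈ V i)
    (hhid : ∀ i, IsHiddenPrimeDivisor
      (algebraMap (AdicCompletion (IsLocalRing.maximalIdeal D) D) Khat) (V i) (hmem i)) :
    ∀ z : AdicCompletion (IsLocalRing.maximalIdeal D) D, ∃ d : D, ∀ i,
      (∃ a ∈ V i, algebraMap (AdicCompletion (IsLocalRing.maximalIdeal D) D) Khat z =
        algebraMap (AdicCompletion (IsLocalRing.maximalIdeal D) D) Khat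
          (algebraMap D (AdicCompletion (IsLocalRing.maximalIdeal D) D) d) * a) ∧
      (∃ b ∈ V i, algebraMap (AdicCompletion (IsLocalRing.maximalIdeal D) D) Khat
          (algebraMap D (AdicCompletion (IsLocalRing.maximalIdeal D) D) d) =
        algebraMap (AdicCompletion (IsLocalRing.maximalIdeal D) D) Khat z * b) := by
  intro z
  by_cases hz0 : z = 0
  · refine ⟨0, fun i => ⟨⟨1, one_mem _, ?_⟩, ⟨1, one_mem _, ?_⟩⟩⟩ <;>
      simp [hz0]
  -- nonzero case
  have hdvr : ∀ i, IsDiscreteValuationRing (V i) := fun i => (hhid i).1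
  have hdom : ∀ i (r : AdicCompletion (IsLocalRing.maximalIdeal D) D), ¬IsUnit r →
      ¬IsUnit ((algebraMap (AdicCompletion (IsLocalRing.maximalIdeal D) D) Khat).codRestrict
        (V i) (hmem i) r) := fun i => (hhid i).2.1
  have hxne : ∀ i, (algebraMap (AdicCompletion (IsLocalRing.maximalIdeal D) D) Khat).codRestrict
      (V i) (hmem i) z ≠ 0 := by
    intro i h
    apply hz0
    have h2 : algebraMap (AdicCompletion (IsLocalRing.maximalIdeal D) D) Khat z = 0 :=
      congrArg Subtype.val h
    exact IsFractionRing.injective (AdicCompletion (IsLocalRing.maximalIdeal D) D) Khat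
      (h2.trans (_root_.map_zero _).symm)
  have hirr : ∀ i, ∃ ϖ : ↥(V i), Irreducible ϖ := fun i =>
    @IsDiscreteValuationRing.exists_irreducible _ _ _ (hdvr i)
  choose ϖ hϖ using hirr
  have hfac : ∀ i, ∃ (m : ℕ) (u : (↥(V i))ˣ),
      (algebraMap (AdicCompletion (IsLocalRing.maximalIdeal D) D) Khat).codRestrict
        (V i) (hmem i) z = u * ϖ i ^ m := fun i =>
    @IsDiscreteValuationRing.eq_unit_mul_pow_irreducible _ _ _ (hdvr i) _ (hxne i) _ (hϖ i)
  choose m u hu using hfac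
  have hmN : ∀ i, m i + 1 ≤ Finset.univ.sup (fun i => m i + 1) := fun i =>
    Finset.le_sup (f := fun i => m i + 1) (Finset.mem_univ i)
  set N : ℕ := Finset.univ.sup (fun i => m i + 1) with hN
  obtain ⟨d, hd⟩ := Submodule.Quotient.mk_surjective
    ((IsLocalRing.maximalIdeal D) ^ N • ⊤ : Submodule D D) (z.val N)
  have hval : (z - algebraMap D (AdicCompletion (IsLocalRing.maximalIdeal D) D) d).val N = 0 := by
    rw [AdicCompletion.val_sub_apply, OT7_val_algebraMap, hd, sub_self]
  have hmemN : z - algebraMap D (AdicCompletion (IsLocalRing.maximalIdeal D) D) d ∈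
      Ideal.map (algebraMap D (AdicCompletion (IsLocalRing.maximalIdeal D) D))
        ((IsLocalRing.maximalIdeal D) ^ N) :=
    OT7_mem_map_of_val_eq_zero _ N _ hval
  refine ⟨d, fun i => ?_⟩
  haveI : IsLocalRing ↥(V i) := (hdvr i).toIsLocalRing
  -- image of the maximal ideal is in the maximal ideal of V i
  have hle : Ideal.map (((algebraMap (AdicCompletion (IsLocalRing.maximalIdeal D) D)
        Khat).codRestrict (V i) (hmem i)).comp
        (algebraMap D (AdicCompletion (IsLocalRing.maximalIdeal D) D)))
      (IsLocalRing.maximalIdeal D) ≤ IsLocalRing.maximalIdeal ↥(V i) := by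
    rw [Ideal.map_le_iff_le_comap]
    intro r hr
    show (algebraMap (AdicCompletion (IsLocalRing.maximalIdeal D) D) Khat).codRestrict
        (V i) (hmem i) (algebraMap D (AdicCompletion (IsLocalRing.maximalIdeal D) D) r) ∈
      IsLocalRing.maximalIdeal ↥(V i)
    rw [IsLocalRing.mem_maximalIdeal, mem_nonunits_iff]
    exact hdom i _ (OT7_nonunit_algebraMap_completion hr)
  have hwmem : (algebraMap (AdicCompletion (IsLocalRing.maximalIdeal D) D) Khat).codRestrict
      (V i) (hmem i) (z - algebraMap D (AdicCompletion (IsLocalRing.maximalIdeal D) D) d) ∈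
      Ideal.span {ϖ i ^ (m i + 1)} := by
    have h1 := Ideal.mem_map_of_mem ((algebraMap (AdicCompletion (IsLocalRing.maximalIdeal D) D)
      Khat).codRestrict (V i) (hmem i)) hmemN
    rw [Ideal.map_map, Ideal.map_pow] at h1
    have h2 := Ideal.pow_right_mono hle N
    have h3 : IsLocalRing.maximalIdeal ↥(V i) = Ideal.span {ϖ i} :=
      (IsDiscreteValuationRing.irreducible_iff_uniformizer _).mp (hϖ i)
    have h4 : (IsLocalRing.maximalIdeal ↥(V i)) ^ N ≤ Ideal.span {ϖ i ^ (m i + 1)} := by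
      rw [h3, Ideal.span_singleton_pow]
      exact Ideal.span_singleton_le_span_singleton.mpr (pow_dvd_pow _ (hmN i))
    exact h4 (h2 h1)
  rw [Ideal.mem_span_singleton] at hwmem
  obtain ⟨s, hs⟩ := hwmem
  set φV := (algebraMap (AdicCompletion (IsLocalRing.maximalIdeal D) D) Khat).codRestrict
    (V i) (hmem i) with hφV
  have hdi : φV (algebraMap D (AdicCompletion (IsLocalRing.maximalIdeal D) D) d)
      = ϖ i ^ m i * ((u i : ↥(V i)) - ϖ i * s) := by
    rw [map_sub] at hs
    have h5 : φV (algebraMap D (AdicCompletion (IsLocalRing.maximalIdeal D) D) d)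
        = φV z - ϖ i ^ (m i + 1) * s := by
      rw [← hs]; ring
    rw [h5, show φV z = (u i : ↥(V i)) * ϖ i ^ m i from hu i]
    ring
  have hunit : IsUnit ((u i : ↥(V i)) - ϖ i * s) := by
    refine OT7_isUnit_sub_of_nonunit (u i).isUnit ?_
    intro h
    exact (hϖ i).not_isUnit (isUnit_of_mul_isUnit_left h)
  obtain ⟨c, hc⟩ := hunit
  rw [← hc] at hdi
  have key : φV (algebraMap D (AdicCompletion (IsLocalRing.maximalIdeal D) D) d)
      = φV z * ((u i)⁻¹ * c : (↥(V i))ˣ) := by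
    rw [hdi, show φV z = (u i : ↥(V i)) * ϖ i ^ m i from hu i, Units.val_mul]
    calc (ϖ i ^ m i : ↥(V i)) * c
        = ((u i : ↥(V i)) * ((u i)⁻¹ : (↥(V i))ˣ)) * (ϖ i ^ m i * c) := by
          rw [Units.mul_inv]; ring
      _ = (u i : ↥(V i)) * ϖ i ^ m i * (((u i)⁻¹ : (↥(V i))ˣ) * (c : ↥(V i))) := by
          ring
  have key2 : φV z = φV (algebraMap D (AdicCompletion (IsLocalRing.maximalIdeal D) D) d)
      * ((((u i)⁻¹ * c : (↥(V i))ˣ))⁻¹ : (↥(V i))ˣ) := by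
    rw [key, mul_assoc, ← Units.val_mul, mul_inv_cancel, Units.val_one, mul_one]
  constructor
  · refine ⟨((((u i)⁻¹ * c : (↥(V i))ˣ)⁻¹ : (↥(V i))ˣ) : ↥(V i)), SetLike.coe_mem _, ?_⟩
    have h6 := congrArg (Subtype.val : ↥(V i) → Khat) key2
    simpa [hφV] using h6
  · refine ⟨(((u i)⁻¹ * c : (↥(V i))ˣ) : ↥(V i)), SetLike.coe_mem _, ?_⟩
    have h6 := congrArg (Subtype.val : ↥(V i) → Khat) key
    simpa [hφV] using h6


end ArticleOT
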